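/- For any x, y ∈ ℤ^n, the L-distance L(x, ⌊(x+y)/2⌋) is equal to either ⌊L(x,y)/2⌋ or ⌈L(x,y)/2⌉, where ⌊(x+y)/2⌋ denotes coordinatewise floor-average. -/
import Mathlib


def Ldist {n : ℕ} [NeZero n] (x y : Fin n → ℤ) : ℤ :=
  (Finset.univ.sup' Finset.univ_nonempty fun i => x i - y i) -
  (Finset.univ.inf' Finset.univ_nonempty fun i => x i - y i)

/-- L(x, ⌊(x+y)/2⌋) is either ⌊L(x,y)/2⌋ or ⌈L(x,y)/2⌉.  Since L(x,y) ≥ 0, these are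
L(x,y)/2 and (L(x,y)+1)/2 using Euclidean division on ℤ. -/
theorem stmt8 (n : ℕ) [NeZero n] (x y : Fin n → ℤ) :
    Ldist x (fun i => (x i + y i) / 2) = Ldist x y / 2 ∨
    Ldist x (fun i => (x i + y i) / 2) = (Ldist x y + 1) / 2 := by
  have hd : ∀ i, x i - (x i + y i) / 2 = (x i - y i + 1) / 2 := by
    intro i; omega
  set d : Fin n → ℤ := fun i => x i - y i with hdef
  have hM : ∃ iM ∈ Finset.univ, (Finset.univ.sup' Finset.univ_nonempty d) = d iM :=
    Finset.exists_mem_eq_sup' _ _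
  have hm : ∃ im ∈ Finset.univ, (Finset.univ.inf' Finset.univ_nonempty d) = d im :=
    Finset.exists_mem_eq_inf' _ _
  obtain ⟨iM, -, hiM⟩ := hM
  obtain ⟨im, -, him⟩ := hm
  have hsup : (Finset.univ.sup' Finset.univ_nonempty fun i => x i - (x i + y i) / 2)
      = (d iM + 1) / 2 := by
    apply le_antisymm
    · apply Finset.sup'_le
      intro i _
      rw [hd i]
      apply Int.ediv_le_ediv (by norm_num)
      have : x i - y i ≤ d iM := hiM ▸ Finset.le_sup' d (Finset.mem_univ i)
      omega
    · calc (d iM + 1) / 2 = x iM - (x iM + y iM) / 2 := (hd iM).symm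
        _ ≤ _ := Finset.le_sup' (fun i => x i - (x i + y i) / 2) (Finset.mem_univ iM)
  have hinf : (Finset.univ.inf' Finset.univ_nonempty fun i => x i - (x i + y i) / 2)
      = (d im + 1) / 2 := by
    apply le_antisymm
    · calc (Finset.univ.inf' Finset.univ_nonempty fun i => x i - (x i + y i) / 2)
          ≤ x im - (x im + y im) / 2 := Finset.inf'_le _ (Finset.mem_univ im)
        _ = (d im + 1) / 2 := hd im
    · apply Finset.le_inf'
      intro i _
      rw [hd i]
      apply Int.ediv_le_ediv (by norm_num)
      have : d im ≤ x i - y i := him ▸ Finset.inf'_le d (Finset.mem_univ i)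
      omega
  unfold Ldist
  rw [hsup, hinf, ← hdef, hiM, him]
  omega
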